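/- For all δ > 0, L > 0 and all functions R : ℝ → ℝ and N : ℝ → ℕ, there exists K₀ > 0 with the following property. Let X be a geodesic metric space with δ-thin triangles, let G₁ and G₂ be subgroups of the group of isometric bijections of X onto itself, and let Δ₁, Δ₂ ⊆ X be nonempty subsets such that for each i ∈ {1, 2}: (a) Δᵢ is L-quasi-convex; (b) g(Δᵢ) = Δᵢ for every g ∈ Gᵢ; (c) every non-identity element of Gᵢ has infinite order; (d) for every D > 0 and all x, y ∈ X with dist(x, y) ≥ R(D), the set {g ∈ Gᵢ : dist(x, g(x)) ≤ D and dist(y, g(y)) ≤ D} is finite with at most N(D) elements; (e) for every r ≥ L and every p ∈ X there exists q ∈ N_r(Δᵢ) = {u ∈ X : infDist(u, Δᵢ) ≤ r} with dist(p, q) = infDist(p, N_r(Δᵢ)). Assume moreover that there exist x₀ ∈ Δ₁ and z₀ ∈ Δ₂ with dist(x₀, z₀) ≤ dist(a, b) for all a ∈ Δ₁ and b ∈ Δ₂. If dist(x₀, z₀) > K₀, then the canonical homomorphism from the free product G₁ * G₂ to the isometry group of X induced by the two inclusions is injective; in particular, the subgroup generated by G₁ and G₂ is isomorphic to the free product G₁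 * G₂. -/

import Mathlib

open Metric Set

open Pointwise

/-- `σ` is a geodesic from `a` to `b`: defined on `[0, dist a b]`, starting at `a`,
ending at `b`, and an isometry on that interval. -/
def IsGeodesicFrom {X : Type*} [MetricSpace X] (σ : ℝ → X) (a b : X) : Prop :=
  σ 0 = a ∧ σ (dist a b) = b ∧
    ∀ s ∈ Set.Icc (0 : ℝ) (dist a b), ∀ t ∈ Set.Icc (0 : ℝ) (dist a b),
      dist (σ s) (σ t) = |s - t|

/-- `X` is a geodesic space: every pair of points is joined by a geodesic. -/
def GeodesicSpace (X : Type*) [MetricSpace X] : Prop :=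
  ∀ a b : X, ∃ σ : ℝ → X, IsGeodesicFrom σ a b

/-- Gromov product `(P|R)_Q` (base point is the first argument). -/
noncomputable def gromovProd {X : Type*} [MetricSpace X] (Q P R : X) : ℝ :=
  (dist P Q + dist R Q - dist P R) / 2

/-- `X` has `δ`-thin triangles. -/
def ThinTriangles (X : Type*) [MetricSpace X] (δ : ℝ) : Prop :=
  ∀ P Q R : X, ∀ σ₁ σ₂ : ℝ → X, IsGeodesicFrom σ₁ Q P → IsGeodesicFrom σ₂ Q R →
    ∀ t ∈ Set.Icc (0 : ℝ) (gromovProd Q P R), dist (σ₁ t) (σ₂ t) ≤ δ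

/-- `Y` is a `K`-quasi-convex subset of `X`. -/
def QuasiConvex {X : Type*} [MetricSpace X] (Y : Set X) (K : ℝ) : Prop :=
  ∀ y₁ ∈ Y, ∀ y₂ ∈ Y, ∀ σ : ℝ → X, IsGeodesicFrom σ y₁ y₂ →
    ∀ t ∈ Set.Icc (0 : ℝ) (dist y₁ y₂), infDist (σ t) Y ≤ K

section GeodLemmas

variable {X : Type*} [MetricSpace X]

theorem IsGeodesicFrom.reverse {σ : ℝ → X} {a b : X} (h : IsGeodesicFrom σ a b) :
    IsGeodesicFrom (fun v => σ (dist a b - v)) b a := by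
  obtain ⟨h0, h1, hiso⟩ := h
  refine ⟨by simpa using h1, ?_, ?_⟩
  · simp only [dist_comm b a, sub_self]; exact h0
  · intro s hs t ht
    rw [dist_comm b a] at hs ht
    have hs' : dist a b - s ∈ Set.Icc (0:ℝ) (dist a b) := by
      constructor <;> [linarith [hs.2]; linarith [hs.1]]
    have ht' : dist a b - t ∈ Set.Icc (0:ℝ) (dist a b) := by
      constructor <;> [linarith [ht.2]; linarith [ht.1]]
    rw [hiso _ hs' _ ht', abs_sub_comm]
    congr 1
    ring

theorem IsGeodesicFrom.isomComp {σ : ℝ → X} {a b : X} (h : IsGeodesicFrom σ a b)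
    (g : X ≃ᵢ X) : IsGeodesicFrom (fun v => g (σ v)) (g a) (g b) := by
  obtain ⟨h0, h1, hiso⟩ := h
  refine ⟨by simp [h0], ?_, ?_⟩
  · show g (σ (dist (g a) (g b))) = g b
    rw [g.dist_eq, h1]
  · intro s hs t ht
    rw [g.dist_eq a b] at hs ht
    show dist (g (σ s)) (g (σ t)) = _
    rw [g.dist_eq, hiso s hs t ht]

theorem IsGeodesicFrom.dist_from_end {σ : ℝ → X} {a b : X} (h : IsGeodesicFrom σ a b)
    {s : ℝ} (hs : s ∈ Set.Icc (0:ℝ) (dist a b)) :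
    dist b (σ s) = dist a b - s := by
  have := h.2.2 (dist a b) ⟨dist_nonneg, le_refl _⟩ s hs
  rw [h.2.1] at this
  rw [this, abs_of_nonneg (by linarith [hs.2])]

theorem IsGeodesicFrom.dist_from_start {σ : ℝ → X} {a b : X} (h : IsGeodesicFrom σ a b)
    {s : ℝ} (hs : s ∈ Set.Icc (0:ℝ) (dist a b)) :
    dist a (σ s) = s := by
  have := h.2.2 0 ⟨le_refl _, dist_nonneg⟩ s hs
  rw [h.1] at this
  rw [this, abs_of_nonpos (by linarith [hs.1]), neg_sub, sub_zero]

end GeodLemmas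

namespace BOSproof

variable {X : Type*} [MetricSpace X]

theorem gp_nonneg (Q P R : X) : 0 ≤ gromovProd Q P R := by
  have h := dist_triangle P Q R
  have h2 := dist_comm Q R
  unfold gromovProd
  linarith

theorem gp_le_left (Q P R : X) : gromovProd Q P R ≤ dist P Q := by
  have h := dist_triangle R P Q
  have h2 := dist_comm R P
  have h3 := dist_comm R Q
  unfold gromovProd
  linarith

theorem gp_comm (Q P R : X) : gromovProd Q P R = gromovProd Q R P := by
  unfold gromovProd
  rw [dist_comm P R]
  ring

theorem gp_le_right (Q P R : X) : gromovProd Q P R ≤ dist R Q := by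
  rw [gp_comm]; exact gp_le_left Q R P

theorem gp_swap (Q P p : X) : gromovProd Q P p + gromovProd P Q p = dist Q P := by
  unfold gromovProd
  rw [dist_comm P Q, dist_comm p Q, dist_comm p P]
  ring

theorem gp_isom (g : X ≃ᵢ X) (Q P R : X) :
    gromovProd (g Q) (g P) (g R) = gromovProd Q P R := by
  unfold gromovProd
  rw [g.dist_eq, g.dist_eq, g.dist_eq]

theorem four_pt {δ : ℝ} (hGeo : GeodesicSpace X) (hThin : ThinTriangles X δ)
    (w a b c : X) :
    min (gromovProd w a b) (gromovProd w b c) - δ ≤ gromovProd w a c := by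
  obtain ⟨σa, hσa⟩ := hGeo w a
  obtain ⟨σb, hσb⟩ := hGeo w b
  obtain ⟨σc, hσc⟩ := hGeo w c
  set m := min (gromovProd w a b) (gromovProd w b c) with hm
  have hm0 : 0 ≤ m := le_min (gp_nonneg _ _ _) (gp_nonneg _ _ _)
  have h1 : dist (σa m) (σb m) ≤ δ :=
    hThin a w b σa σb hσa hσb m ⟨hm0, min_le_left _ _⟩
  have h2 : dist (σb m) (σc m) ≤ δ :=
    hThin b w c σb σc hσb hσc m ⟨hm0, min_le_right _ _⟩
  have hma : m ≤ dist w a := le_trans (min_le_left _ _) (by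
    have := gp_le_left w a b; rwa [dist_comm a w] at this)
  have hmc : m ≤ dist w c := le_trans (min_le_right _ _) (by
    have := gp_le_right w b c; rwa [dist_comm c w] at this)
  have ha' : dist a (σa m) = dist w a - m := hσa.dist_from_end ⟨hm0, hma⟩
  have hc' : dist c (σc m) = dist w c - m := hσc.dist_from_end ⟨hm0, hmc⟩
  have htri : dist a c ≤ dist a (σa m) + dist (σa m) (σb m) + dist (σb m) (σc m)
      + dist (σc m) c := by
    calc dist a c ≤ dist a (σb m) + dist (σb m) (σc m) + dist (σc m) c :=
          dist_triangle4 a (σb m) (σc m) c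
      _ ≤ dist a (σa m) + dist (σa m) (σb m) + dist (σb m) (σc m) + dist (σc m) c := by
          linarith [dist_triangle a (σa m) (σb m)]
  rw [ha'] at htri
  have hcc : dist (σc m) c = dist w c - m := by rw [dist_comm]; exact hc'
  rw [hcc] at htri
  have e1 := dist_comm a w
  have e2 := dist_comm c w
  unfold gromovProd
  linarith

end BOSproof

namespace BOSproof

section Core

variable {X : Type*} [MetricSpace X] {δ L : ℝ}

/-- Lemma L1 : if `x ∈ Δ` is a nearest point of the `L`-quasiconvex set `Δ` to `z`,
then for every `a ∈ Δ`, `dist z a ≥ dist x z + dist x a - 2(δ+L)`. -/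
theorem lemma_L1 (hδ : 0 < δ) (hL : 0 < L)
    (hGeo : GeodesicSpace X) (hThin : ThinTriangles X δ)
    {Δ : Set X} (hQC : QuasiConvex Δ L) {x z : X} (hx : x ∈ Δ)
    (hmin : ∀ a ∈ Δ, dist x z ≤ dist z a)
    {a : X} (ha : a ∈ Δ) :
    dist x z + dist x a - 2 * (δ + L) ≤ dist z a := by
  obtain ⟨σ, hσ⟩ := hGeo x z
  obtain ⟨τ, hτ⟩ := hGeo x a
  set m := gromovProd x z a with hm
  have hm0 : 0 ≤ m := gp_nonneg _ _ _
  have hmd : m ≤ dist x z := by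
    have := gp_le_left x z a; rwa [dist_comm z x] at this
  have hma : m ≤ dist x a := by
    have := gp_le_right x z a; rwa [dist_comm a x] at this
  have hthin : dist (σ m) (τ m) ≤ δ := hThin z x a σ τ hσ hτ m ⟨hm0, le_refl _⟩
  have hqc : infDist (τ m) Δ ≤ L := hQC x hx a ha τ hτ m ⟨hm0, hma⟩
  have hzσ : dist z (σ m) = dist x z - m := hσ.dist_from_end ⟨hm0, hmd⟩
  -- ε-argument:  m ≤ δ + L
  have key : m ≤ δ + L := by
    by_contra hcon
    push_neg at hcon
    have hε : 0 < (m - (δ + L)) / 2 := by linarith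
    obtain ⟨a', ha', hda'⟩ : ∃ a' ∈ Δ, dist (τ m) a' < L + (m - (δ + L)) / 2 := by
      have hne : Δ.Nonempty := ⟨x, hx⟩
      have := (Metric.infDist_lt_iff hne (x := τ m) (r := L + (m - (δ + L)) / 2)).mp
        (by linarith)
      obtain ⟨a', ha', h⟩ := this
      exact ⟨a', ha', h⟩
    have h1 : dist x z ≤ dist z a' := hmin a' ha'
    have h2 : dist z a' ≤ dist z (σ m) + dist (σ m) (τ m) + dist (τ m) a' :=
      dist_triangle4 z (σ m) (τ m) a'
    rw [hzσ] at h2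
    linarith
  -- unfold and conclude
  have : gromovProd x z a ≤ δ + L := key
  unfold gromovProd at this
  have e1 := dist_comm z x
  have e2 := dist_comm a x
  linarith

/-- Height lemma: points of a geodesic from `x` to `z` at parameter `s` are at distance at
least `s + dist x a - 2(δ+L)` from any `a ∈ Δ`. -/
theorem lemma_height (hδ : 0 < δ) (hL : 0 < L)
    (hGeo : GeodesicSpace X) (hThin : ThinTriangles X δ)
    {Δ : Set X} (hQC : QuasiConvex Δ L) {x z : X} (hx : x ∈ Δ)
    (hmin : ∀ a ∈ Δ, dist x z ≤ dist z a)
    {σ : ℝ → X} (hσ : IsGeodesicFrom σ x z) {s : ℝ}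
    (hs : s ∈ Set.Icc (0:ℝ) (dist x z))
    {a : X} (ha : a ∈ Δ) :
    s + dist x a - 2 * (δ + L) ≤ dist (σ s) a := by
  have h1 := lemma_L1 hδ hL hGeo hThin hQC hx hmin ha
  have h2 : dist z a ≤ dist z (σ s) + dist (σ s) a := dist_triangle _ _ _
  have h3 : dist z (σ s) = dist x z - s := hσ.dist_from_end hs
  linarith

/-- (D): if the "feet" are far apart (≥ T₁ := 5δ+4L+2), the Gromov product
`(z|z')_x` is at most `M̄ := 4δ+3L+1`. -/
theorem lemma_D (hδ : 0 < δ) (hL : 0 < L)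
    (hGeo : GeodesicSpace X) (hThin : ThinTriangles X δ)
    {Δ : Set X} (hQC : QuasiConvex Δ L) {x z x' z' : X}
    (hx : x ∈ Δ) (hx' : x' ∈ Δ)
    (hmin : ∀ a ∈ Δ, dist x z ≤ dist z a)
    (hmin' : ∀ a ∈ Δ, dist x z ≤ dist z' a)
    (hxz' : dist x' z' = dist x z)
    (ht : 5*δ + 4*L + 2 ≤ dist x x') :
    gromovProd x z z' ≤ 4*δ + 3*L + 1 := by
  set d := dist x z with hd
  set t := dist x x' with htdef
  set ℓ := dist x z' with hldef
  -- ℓ ≥ d + t - 2(δ+L)  via L1 applied to the pair (x', z')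
  have hmin'' : ∀ a ∈ Δ, dist x' z' ≤ dist z' a := by
    intro a ha; rw [hxz']; exact hmin' a ha
  have hll : dist x' z' + dist x' x - 2*(δ+L) ≤ dist z' x :=
    lemma_L1 hδ hL hGeo hThin hQC hx' hmin'' hx
  have hl_low : d + t - 2*(δ+L) ≤ ℓ := by
    rw [hxz'] at hll
    have e1 := dist_comm x' x
    have e2 := dist_comm z' x
    simp only [hldef, htdef, hd] at *
    linarith
  obtain ⟨σ, hσ⟩ := hGeo x z
  obtain ⟨γ, hγ⟩ := hGeo x z'
  obtain ⟨η, hη⟩ := hGeo x x'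
  set ρ := gromovProd x z z' with hρ
  set u := min ρ (t - (δ + L)) with hu
  have hρ0 : 0 ≤ ρ := gp_nonneg _ _ _
  have hu0 : 0 ≤ u := le_min hρ0 (by linarith)
  have hthin1 : dist (σ u) (γ u) ≤ δ :=
    hThin z x z' σ γ hσ hγ u ⟨hu0, min_le_left _ _⟩
  -- second product
  have hprod2 : t - (δ + L) ≤ gromovProd x z' x' := by
    unfold gromovProd
    have e1 := dist_comm z' x
    have e2 := dist_comm x' x
    have e3 : dist z' x' = d := by rw [dist_comm]; exact hxz'
    simp only [htdef, hldef, hd] at *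
    linarith
  have hthin2 : dist (γ u) (η u) ≤ δ :=
    hThin z' x x' γ η hγ hη u ⟨hu0, le_trans (min_le_right _ _) hprod2⟩
  have hut : u ≤ t := le_trans (min_le_right _ _) (by linarith)
  have hqc : infDist (η u) Δ ≤ L := hQC x hx x' hx' η hη u ⟨hu0, hut⟩
  -- ε-argument
  have key : u ≤ 2*(δ+L) + 2*δ + L := by
    by_contra hcon
    push_neg at hcon
    set ε := (u - (2*(δ+L) + 2*δ + L)) / 2 with hε
    have hε0 : 0 < ε := by simp only [hε]; linarith
    obtain ⟨a', ha', hda'⟩ : ∃ a' ∈ Δ, dist (η u) a' < L + ε := by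
      have hne : Δ.Nonempty := ⟨x, hx⟩
      have hlt : infDist (η u) Δ < L + ε := lt_of_le_of_lt hqc (by linarith)
      obtain ⟨a', ha', h⟩ := (Metric.infDist_lt_iff hne).mp hlt
      exact ⟨a', ha', h⟩
    have hud : u ≤ d := le_trans (min_le_left _ _) (by
      have := gp_le_left x z z'; rwa [dist_comm z x] at this)
    have hheight : u + dist x a' - 2*(δ+L) ≤ dist (σ u) a' :=
      lemma_height hδ hL hGeo hThin hQC hx hmin hσ ⟨hu0, hud⟩ ha'
    have htri : dist (σ u) a' ≤ dist (σ u) (γ u) + dist (γ u) (η u) + dist (η u) a' :=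
      dist_triangle4 _ _ _ _
    have hxa' : 0 ≤ dist x a' := dist_nonneg
    linarith
  -- conclude : u ≤ M̄ - 1, and t - (δ+L) > M̄ - 1, so ρ ≤ M̄
  have h2 : t - (δ + L) > 2*(δ+L) + 2*δ + L := by
    simp only [htdef] at *
    linarith
  have : ρ ≤ 2*(δ+L) + 2*δ + L := by
    by_contra hρbig
    push_neg at hρbig
    have hx2 : 2*(δ+L) + 2*δ + L < u := lt_min hρbig h2
    linarith
  linarith

/-- (E): fellow-travelling along the common germ.  If the feet are `≤ T₁` apart and
`T₁ ≤ s ≤ (z|z')_x - T₁`, then `dist (σ s) (σ' s) ≤ θ := 7δ+4L+2`. -/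
theorem lemma_E (hδ : 0 < δ) (hL : 0 < L)
    (hGeo : GeodesicSpace X) (hThin : ThinTriangles X δ)
    {Δ : Set X} (hQC : QuasiConvex Δ L) {x z x' z' : X}
    (hx : x ∈ Δ) (hx' : x' ∈ Δ)
    (hmin : ∀ a ∈ Δ, dist x z ≤ dist z a)
    (hmin' : ∀ a ∈ Δ, dist x z ≤ dist z' a)
    (hxz' : dist x' z' = dist x z)
    (ht : dist x x' ≤ 5*δ + 4*L + 2)
    {σ σ' : ℝ → X} (hσ : IsGeodesicFrom σ x z) (hσ' : IsGeodesicFrom σ' x' z')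
    {s : ℝ} (hs1 : 5*δ + 4*L + 2 ≤ s) (hs2 : s ≤ gromovProd x z z' - (5*δ + 4*L + 2)) :
    dist (σ s) (σ' s) ≤ 7*δ + 4*L + 2 := by
  set T1 : ℝ := 5*δ + 4*L + 2 with hT1
  set d := dist x z with hd
  set t := dist x x' with htdef
  set ℓ := dist x z' with hldef
  set ρ := gromovProd x z z' with hρdef
  set r := ℓ - d with hrdef
  have ht0 : (0:ℝ) ≤ t := dist_nonneg
  -- bounds on ℓ and r
  have hmin'' : ∀ a ∈ Δ, dist x' z' ≤ dist z' a := by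
    intro a ha; rw [hxz']; exact hmin' a ha
  have hll : dist x' z' + dist x' x - 2*(δ+L) ≤ dist z' x :=
    lemma_L1 hδ hL hGeo hThin hQC hx' hmin'' hx
  have hl_low : d + t - 2*(δ+L) ≤ ℓ := by
    rw [hxz'] at hll
    have e1 := dist_comm x' x
    have e2 := dist_comm z' x
    simp only [hldef, htdef, hd] at *
    linarith
  have hl_up : ℓ ≤ t + d := by
    have := dist_triangle x x' z'
    rw [hxz'] at this
    simp only [hldef, htdef, hd] at *
    linarith
  have hr1 : t - 2*(δ+L) ≤ r := by simp only [hrdef]; linarith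
  have hr2 : r ≤ t := by simp only [hrdef]; linarith
  have habsr : |r| ≤ T1 := by
    rw [abs_le]
    constructor
    · have : (0:ℝ) ≤ t := dist_nonneg
      simp only [hT1]; linarith
    · simp only [hT1]; linarith
  obtain ⟨γ, hγ⟩ := hGeo x z'
  set u := s + r with hudef
  have hρd : ρ ≤ d := by
    have := gp_le_left x z z'; rw [dist_comm z x] at this; exact this
  have hud : u ∈ Set.Icc (0:ℝ) ρ := by
    constructor
    · simp only [hudef]; simp only [hT1] at hs1; linarith
    · simp only [hudef]; simp only [hT1] at hs2; linarith
  -- thin triangle at x between σ and γ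
  have hthin1 : dist (σ u) (γ u) ≤ δ := hThin z x z' σ γ hσ hγ u hud
  -- thin triangle at z' between reversed γ and reversed σ'
  have hγrev : IsGeodesicFrom (fun v => γ (dist x z' - v)) z' x := hγ.reverse
  have hσ'rev : IsGeodesicFrom (fun v => σ' (dist x' z' - v)) z' x' := hσ'.reverse
  have hprod : d - (δ + L) ≤ gromovProd z' x x' := by
    unfold gromovProd
    have e1 := dist_comm x z'
    have e2 := dist_comm x' z'
    have e3 : dist x' z' = d := hxz'
    simp only [hldef, htdef, hd] at *
    linarith
  set v := d - s with hvdef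
  have hv : v ∈ Set.Icc (0:ℝ) (gromovProd z' x x') := by
    constructor
    · simp only [hvdef]
      have : s ≤ ρ - T1 := by simp only [hT1] at hs2 ⊢; exact hs2
      linarith
    · simp only [hvdef]
      have hsc : δ + L ≤ s := by simp only [hT1] at hs1; linarith
      linarith
  have hthin2 : dist (γ (dist x z' - v)) (σ' (dist x' z' - v)) ≤ δ :=
    hThin x z' x' _ _ hγrev hσ'rev v hv
  have hγarg : dist x z' - v = u := by
    simp only [hldef, hudef, hvdef, hrdef]; ring
  have hσ'arg : dist x' z' - v = s := by
    rw [hxz']; simp only [hvdef, hd]; ring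
  rw [hγarg, hσ'arg] at hthin2
  -- assemble
  have hsmem : s ∈ Set.Icc (0:ℝ) d := by
    constructor
    · simp only [hT1] at hs1; linarith
    · simp only [hT1] at hs2; linarith
  have humem : u ∈ Set.Icc (0:ℝ) d := ⟨hud.1, le_trans hud.2 hρd⟩
  have hdistσ : dist (σ s) (σ u) = |s - u| := hσ.2.2 s hsmem u humem
  have : |s - u| = |r| := by
    simp only [hudef]
    rw [abs_sub_comm]
    congr 1
    ring
  have htri : dist (σ s) (σ' s) ≤ dist (σ s) (σ u) + dist (σ u) (γ u) + dist (γ u) (σ' s) :=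
    dist_triangle4 _ _ _ _
  rw [hdistσ, this] at htri
  simp only [hT1] at habsr
  linarith

end Core

end BOSproof

namespace BOSproof

section Constants

variable (δ L : ℝ) (R : ℝ → ℝ) (N : ℝ → ℕ)

/-- threshold for the feet -/
noncomputable def T1 : ℝ := 5*δ + 4*L + 2
/-- fellow-travelling constant -/
noncomputable def th : ℝ := 7*δ + 4*L + 2
/-- bound in lemma (D) -/
noncomputable def Mb : ℝ := 4*δ + 3*L + 1
/-- number of powers used in the counting argument -/
noncomputable def MM : ℕ := N (th δ L) + 1
/-- the level at which acylindricity is applied -/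
noncomputable def s1 : ℝ := max (R (th δ L)) 0 + Mb δ L + T1 δ L + 1
noncomputable def s2 : ℝ := s1 δ L R + T1 δ L + (MM δ L N) * th δ L / 2 + 1
/-- the bound on the Gromov products `(z|gz)_x` -/
noncomputable def BB : ℝ := s2 δ L R N + T1 δ L + Mb δ L + 1
/-- the final constant -/
noncomputable def KK : ℝ := 3 * BB δ L R N + 20*(δ + L + 1)

end Constants

section CoreMain

variable {X : Type*} [MetricSpace X] {δ L : ℝ} {R : ℝ → ℝ} {N : ℝ → ℕ}

theorem core_rho_le_B (hδ : 0 < δ) (hL : 0 < L)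
    (hGeo : GeodesicSpace X) (hThin : ThinTriangles X δ)
    {Δ : Set X} (hQC : QuasiConvex Δ L) {x z : X} (hx : x ∈ Δ)
    (hmin : ∀ a ∈ Δ, dist x z ≤ dist z a)
    {G : Subgroup (X ≃ᵢ X)}
    (hInv : ∀ u : X ≃ᵢ X, u ∈ G → u '' Δ = Δ)
    (hTor : ∀ u : X ≃ᵢ X, u ∈ G → u ≠ 1 → ¬ IsOfFinOrder u)
    (hAcyl : ∀ D : ℝ, 0 < D → ∀ p q : X, dist p q ≥ R D →
      {u : X ≃ᵢ X | u ∈ G ∧ dist p (u p) ≤ D ∧ dist q (u q) ≤ D}.Finite ∧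
      {u : X ≃ᵢ X | u ∈ G ∧ dist p (u p) ≤ D ∧ dist q (u q) ≤ D}.ncard ≤ N D)
    {g : X ≃ᵢ X} (hg : g ∈ G) (hgne : g ≠ 1) :
    gromovProd x z (g z) ≤ BB δ L R N := by
  by_contra hB
  push_neg at hB
  -- numeric facts
  have hT1pos : 0 < T1 δ L := by unfold T1; linarith
  have hthpos : 0 < th δ L := by unfold th; linarith
  have hMbpos : 0 < Mb δ L := by unfold Mb; linarith
  have hT1th : T1 δ L ≤ th δ L := by unfold T1 th; linarith
  have hs1R : R (th δ L) < s1 δ L R := by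
    unfold s1; have := le_max_left (R (th δ L)) 0; linarith
  have hs1pos : 0 < s1 δ L R := by
    unfold s1; have := le_max_right (R (th δ L)) 0; linarith
  have hs1T1 : T1 δ L ≤ s1 δ L R := by
    unfold s1; have := le_max_right (R (th δ L)) 0; linarith
  have hs1Mb : Mb δ L < s1 δ L R := by
    unfold s1 Mb T1; have := le_max_right (R (th δ L)) 0; linarith
  have hMMth : 0 ≤ (MM δ L N : ℝ) * th δ L := by positivity
  have hs12 : s1 δ L R ≤ s2 δ L R N := by unfold s2; linarith
  have hBMb : Mb δ L + 1 ≤ BB δ L R N := by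
    unfold BB; linarith [hs12, hs1pos, hT1pos]
  -- basic facts about the action
  have hmemΔ : ∀ u : X ≃ᵢ X, u ∈ G → ∀ a ∈ Δ, u a ∈ Δ := by
    intro u hu a ha
    have : u a ∈ u '' Δ := Set.mem_image_of_mem _ ha
    rwa [hInv u hu] at this
  have hmin_u : ∀ u : X ≃ᵢ X, u ∈ G → ∀ a ∈ Δ, dist x z ≤ dist (u z) a := by
    intro u hu a ha
    have hmem : u⁻¹ a ∈ Δ := hmemΔ u⁻¹ (inv_mem hu) a ha
    have e := IsometryEquiv.dist_eq u⁻¹ (u z) a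
    rw [IsometryEquiv.inv_apply_self] at e
    rw [← e]
    exact hmin _ hmem
  have hdist_u : ∀ u : X ≃ᵢ X, dist (u x) (u z) = dist x z := fun u =>
    IsometryEquiv.dist_eq u x z
  -- the geodesic
  obtain ⟨σ, hσ⟩ := hGeo x z
  set d := dist x z with hd
  set ρ := gromovProd x z (g z) with hρ
  have hρd : ρ ≤ d := by
    have := gp_le_left x z (g z); rw [dist_comm z x] at this; exact this
  have hdB : BB δ L R N < d := lt_of_lt_of_le hB hρd
  -- t(g) < T1
  have ht_g : dist x (g x) < T1 δ L := by
    by_contra hcon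
    push_neg at hcon
    have hD := lemma_D hδ hL hGeo hThin hQC hx (hmemΔ g hg x hx) hmin (hmin_u g hg)
      (hdist_u g) (by unfold T1 at hcon; exact hcon)
    have : ρ ≤ Mb δ L := by unfold Mb; exact hD
    linarith
  -- fellow travelling for g
  have hE_g : ∀ s : ℝ, T1 δ L ≤ s → s ≤ ρ - T1 δ L → dist (σ s) (g (σ s)) ≤ th δ L := by
    intro s h1 h2
    unfold T1 at h1 h2
    have := lemma_E hδ hL hGeo hThin hQC hx (hmemΔ g hg x hx) hmin (hmin_u g hg)
      (hdist_u g) (by unfold T1 at ht_g; linarith) hσ (hσ.isomComp g)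
      (s := s) h1 h2
    unfold th
    exact this
  -- s₂ is in the zone
  have hs2zone1 : T1 δ L ≤ s2 δ L R N := le_trans hs1T1 hs12
  have hs2zone2 : s2 δ L R N ≤ ρ - T1 δ L := by
    have h' : BB δ L R N < ρ := hB
    unfold BB at h'
    linarith
  have hs2d : s2 δ L R N ∈ Set.Icc (0:ℝ) d := by
    constructor
    · linarith
    · linarith
  -- powers travel at most k·θ
  have hpow : ∀ k : ℕ, dist (σ (s2 δ L R N)) ((g ^ k) (σ (s2 δ L R N))) ≤ k * th δ L := by
    intro k
    induction k with
    | zero => simp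
    | succ k ih =>
      have h1 : dist (σ (s2 δ L R N)) (g (σ (s2 δ L R N))) ≤ th δ L :=
        hE_g _ hs2zone1 hs2zone2
      have h2 : (g ^ (k+1)) (σ (s2 δ L R N)) = g ((g ^ k) (σ (s2 δ L R N))) := by
        rw [pow_succ']
        rfl
      have h3 : dist (g (σ (s2 δ L R N))) (g ((g ^ k) (σ (s2 δ L R N))))
          = dist (σ (s2 δ L R N)) ((g ^ k) (σ (s2 δ L R N))) :=
        IsometryEquiv.dist_eq g _ _
      calc dist (σ (s2 δ L R N)) ((g ^ (k+1)) (σ (s2 δ L R N)))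
          ≤ dist (σ (s2 δ L R N)) (g (σ (s2 δ L R N)))
            + dist (g (σ (s2 δ L R N))) ((g ^ (k+1)) (σ (s2 δ L R N))) := dist_triangle _ _ _
        _ ≤ th δ L + k * th δ L := by
            rw [h2, h3]; linarith [ih]
        _ = (k+1 : ℕ) * th δ L := by push_cast; ring
  -- facts about each power 1 ≤ k ≤ M
  have hkfacts : ∀ k : ℕ, 1 ≤ k → k ≤ MM δ L N →
      dist x ((g ^ k) x) ≤ th δ L ∧ dist (σ (s1 δ L R)) ((g ^ k) (σ (s1 δ L R))) ≤ th δ L := by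
    intro k hk1 hkM
    set u : X ≃ᵢ X := g ^ k with hu
    have huG : u ∈ G := pow_mem hg k
    set ρk := gromovProd x z (u z) with hρk
    -- lower bound for ρk
    have hρk_low : s1 δ L R + T1 δ L + 1 ≤ ρk := by
      have h1 : dist z (σ (s2 δ L R N)) = d - s2 δ L R N := hσ.dist_from_end hs2d
      have h2 : dist (u (σ (s2 δ L R N))) (u z) = dist (σ (s2 δ L R N)) z :=
        IsometryEquiv.dist_eq u _ _
      have h3 : dist z (u z) ≤ dist z (σ (s2 δ L R N))
          + dist (σ (s2 δ L R N)) (u (σ (s2 δ L R N)))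
          + dist (u (σ (s2 δ L R N))) (u z) := dist_triangle4 _ _ _ _
      have h4 : dist (σ (s2 δ L R N)) (u (σ (s2 δ L R N))) ≤ k * th δ L := hpow k
      have h5 : d ≤ dist (u z) x := hmin_u u huG x hx
      have h6 : dist z (u z) = dist z x + dist (u z) x - 2 * ρk := by
        rw [hρk]; unfold gromovProd; ring
      have h7 : dist z x = d := dist_comm z x
      have h8 : dist (σ (s2 δ L R N)) z = d - s2 δ L R N := by
        rw [dist_comm]; exact h1
      have hkM' : (k : ℝ) * th δ L ≤ (MM δ L N : ℝ) * th δ L := by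
        apply mul_le_mul_of_nonneg_right _ (le_of_lt hthpos)
        exact_mod_cast hkM
      have hs2eq : s2 δ L R N = s1 δ L R + T1 δ L + (MM δ L N : ℝ) * th δ L / 2 + 1 := rfl
      linarith
    -- t(g^k) < T1
    have hρk_Mb : Mb δ L < ρk := by linarith
    have ht_u : dist x (u x) < T1 δ L := by
      by_contra hcon
      push_neg at hcon
      have hD := lemma_D hδ hL hGeo hThin hQC hx (hmemΔ u huG x hx) hmin (hmin_u u huG)
        (hdist_u u) (by unfold T1 at hcon; exact hcon)
      have : ρk ≤ Mb δ L := by unfold Mb; exact hD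
      linarith
    constructor
    · linarith
    · have hz1 : (5:ℝ)*δ + 4*L + 2 ≤ s1 δ L R := by unfold T1 at hs1T1; exact hs1T1
      have hz2 : s1 δ L R ≤ gromovProd x z (u z) - (5*δ + 4*L + 2) := by
        unfold T1 at hρk_low hT1pos
        rw [← hρk]
        linarith
      have := lemma_E hδ hL hGeo hThin hQC hx (hmemΔ u huG x hx) hmin (hmin_u u huG)
        (hdist_u u) (by unfold T1 at ht_u; linarith) hσ (hσ.isomComp u)
        (s := s1 δ L R) hz1 hz2
      unfold th
      exact this
  -- the counting argument
  have hs1d : s1 δ L R ∈ Set.Icc (0:ℝ) d := ⟨le_of_lt hs1pos, by linarith [hs2d.2]⟩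
  set y₁ := σ (s1 δ L R) with hy₁
  have hdist_xy : dist x y₁ = s1 δ L R := hσ.dist_from_start hs1d
  have hRcond : dist x y₁ ≥ R (th δ L) := by rw [hdist_xy]; linarith
  obtain ⟨hSfin, hScard⟩ := hAcyl (th δ L) hthpos x y₁ hRcond
  set S := {u : X ≃ᵢ X | u ∈ G ∧ dist x (u x) ≤ th δ L ∧ dist y₁ (u y₁) ≤ th δ L} with hS
  have hginj : Function.Injective (fun n : ℕ => g ^ n) :=
    injective_pow_iff_not_isOfFinOrder.mpr (hTor g hg hgne)
  set F : Fin (MM δ L N + 1) → (X ≃ᵢ X) := fun k => g ^ (k : ℕ) with hF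
  have hFinj : Function.Injective F := by
    intro i j hij
    have : (i : ℕ) = (j : ℕ) := hginj hij
    exact Fin.ext this
  have hFsub : Set.range F ⊆ S := by
    rintro _ ⟨k, rfl⟩
    simp only [hF, hS, Set.mem_setOf_eq]
    refine ⟨pow_mem hg _, ?_⟩
    rcases Nat.eq_zero_or_pos (k : ℕ) with hk0 | hk1
    · rw [hk0]
      simp only [pow_zero]
      constructor
      · simp only [IsometryEquiv.coe_one, id_eq, dist_self]; linarith
      · simp only [IsometryEquiv.coe_one, id_eq, dist_self]; linarith
    · have hkM : (k : ℕ) ≤ MM δ L N := Nat.lt_succ_iff.mp k.isLt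
      exact (hkfacts (k : ℕ) hk1 hkM)
  have hcard1 : (Set.range F).ncard = MM δ L N + 1 := by
    rw [← Set.image_univ, Set.ncard_image_of_injective _ hFinj, Set.ncard_univ]
    simp
  have hcard2 : (Set.range F).ncard ≤ S.ncard := Set.ncard_le_ncard hFsub hSfin
  rw [hcard1] at hcard2
  have hfin : MM δ L N + 1 ≤ N (th δ L) := le_trans hcard2 hScard
  have : MM δ L N = N (th δ L) + 1 := rfl
  omega

end CoreMain

section PingPongStep

variable {X : Type*} [MetricSpace X] {δ L : ℝ}

/-- The ping-pong step: if `(z|gz)_x ≤ Bo`, `g⁻¹x ∈ Δ`, and `p` lies on the far side of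
the mirror at `z` (i.e. `(x|p)_z ≤ β`), then `g p` lies on the far side of the mirror
at `x`. -/
theorem pp_step (hδ : 0 < δ) (hL : 0 < L)
    (hGeo : GeodesicSpace X) (hThin : ThinTriangles X δ)
    {Δ : Set X} (hQC : QuasiConvex Δ L) {x z : X} (hx : x ∈ Δ)
    (hmin : ∀ a ∈ Δ, dist x z ≤ dist z a)
    {g : X ≃ᵢ X} {Bo β : ℝ} (hβ : β = Bo + δ)
    (hcore : gromovProd x z (g z) ≤ Bo)
    (hq : g⁻¹ x ∈ Δ)
    (hd1 : β + 2*δ + (δ + L) < dist x z)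
    (hd2 : Bo + β + 2*δ < dist x z)
    {p : X} (hp : gromovProd z x p ≤ β) :
    gromovProd x z (g p) ≤ β := by
  set q := g⁻¹ x with hqdef
  set d := dist x z with hd
  -- Step 1 : (x|q)_z ≥ d - (δ+L)
  have hL1 : dist x z + dist x q - 2*(δ+L) ≤ dist z q :=
    lemma_L1 hδ hL hGeo hThin hQC hx hmin hq
  have hstep1 : d - (δ + L) ≤ gromovProd z x q := by
    unfold gromovProd
    have e1 := dist_comm x z
    have e2 := dist_comm q z
    have e3 := dist_comm x q
    linarith
  -- Step 2 : (q|p)_z ≤ β + δ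
  have h4pt := four_pt hGeo hThin z x q p
  have hstep2 : gromovProd z q p ≤ β + δ := by
    by_contra hcon
    push_neg at hcon
    have hm : β + δ < min (gromovProd z x q) (gromovProd z q p) :=
      lt_min (by linarith) hcon
    linarith
  -- Step 3 : (z|p)_q ≥ d - β - δ
  have hswap := gp_swap z q p
  have hzq : d ≤ dist z q := hmin q hq
  have hstep3 : d - β - δ ≤ gromovProd q z p := by linarith
  -- Step 4 : transfer through g: (g z|g p)_x ≥ d - β - δ
  have hgq : g q = x := IsometryEquiv.apply_inv_self g x
  have hiso : gromovProd x (g z) (g p) = gromovProd q z p := by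
    rw [← gp_isom g q z p, hgq]
  have hstep4 : d - β - δ ≤ gromovProd x (g z) (g p) := by rw [hiso]; exact hstep3
  -- Step 5 : conclude
  have h4pt' := four_pt hGeo hThin x z (g p) (g z)
  have hcomm : gromovProd x (g p) (g z) = gromovProd x (g z) (g p) := gp_comm _ _ _
  by_contra hcon
  push_neg at hcon
  have hm : Bo + δ < min (gromovProd x z (g p)) (gromovProd x (g p) (g z)) := by
    apply lt_min
    · linarith
    · rw [hcomm]; linarith
  linarith

end PingPongStep

end BOSproof

/-- The tautological action of the isometry group on the space. -/
instance isometryEquivMulAction {Y : Type*} [MetricSpace Y] : MulAction (Y ≃ᵢ Y) Y where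
  smul g p := g p
  one_smul _ := rfl
  mul_smul _ _ _ := rfl

@[simp] theorem isometryEquiv_smul_def {Y : Type*} [MetricSpace Y] (g : Y ≃ᵢ Y) (p : Y) :
    g • p = g p := rfl

namespace BOSproof

section Plumbing

/-- Transfer injectivity from the indexed free product over `Bool` to the binary coproduct. -/
theorem binary_transfer {Γ : Type*} [Group Γ] (G₁ G₂ : Subgroup Γ)
    (hinj : Function.Injective
      (Monoid.CoprodI.lift (fun b : Bool => ((bif b then G₁ else G₂)).subtype))) :
    Function.Injective (Monoid.Coprod.lift G₁.subtype G₂.subtype) := by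
  classical
  let e : Monoid.Coprod ↥G₁ ↥G₂ →* Monoid.CoprodI (fun b : Bool => ↥(bif b then G₁ else G₂)) :=
    Monoid.Coprod.lift
      (Monoid.CoprodI.of (M := fun b : Bool => ↥(bif b then G₁ else G₂)) (i := true))
      (Monoid.CoprodI.of (M := fun b : Bool => ↥(bif b then G₁ else G₂)) (i := false))
  have hcomp : (Monoid.CoprodI.lift
      (fun b : Bool => ((bif b then G₁ else G₂)).subtype)).comp e
      = Monoid.Coprod.lift G₁.subtype G₂.subtype := by
    apply Monoid.Coprod.hom_ext <;> ext x <;>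
      · simp only [e, MonoidHom.comp_apply, Monoid.Coprod.lift_apply_inl,
          Monoid.Coprod.lift_apply_inr, Monoid.CoprodI.lift_of]
        rfl
  let f' : ∀ b : Bool, ↥(bif b then G₁ else G₂) →* Monoid.Coprod ↥G₁ ↥G₂ :=
    fun b => match b with
      | true => Monoid.Coprod.inl
      | false => Monoid.Coprod.inr
  let e' : Monoid.CoprodI (fun b : Bool => ↥(bif b then G₁ else G₂)) →* Monoid.Coprod ↥G₁ ↥G₂ :=
    Monoid.CoprodI.lift f'
  have hid : e'.comp e = MonoidHom.id _ := by
    apply Monoid.Coprod.hom_ext <;> ext x <;>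
      · simp only [e, e', f', MonoidHom.comp_apply, Monoid.Coprod.lift_apply_inl,
          Monoid.Coprod.lift_apply_inr, Monoid.CoprodI.lift_of, MonoidHom.id_apply]
  have hLeft : Function.LeftInverse e' e := by
    intro w
    calc e' (e w) = (e'.comp e) w := rfl
      _ = w := by rw [hid]; rfl
  rw [← hcomp, MonoidHom.coe_comp]
  exact hinj.comp hLeft.injective

end Plumbing

end BOSproof

namespace BOSproof

section Helpers

theorem trivial_case {Γ : Type*} [Group Γ] (G₁ G₂ : Subgroup Γ)
    (h1 : ∀ g ∈ G₁, g = 1) (h2 : ∀ g ∈ G₂, g = 1) :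
    Function.Injective (Monoid.Coprod.lift G₁.subtype G₂.subtype) := by
  have key : ∀ w : Monoid.Coprod ↥G₁ ↥G₂, w = 1 := by
    intro w
    induction w using Monoid.Coprod.induction_on with
    | inl x =>
      have hx : x = 1 := Subtype.ext (h1 (x : Γ) x.2)
      rw [hx, map_one]
    | inr x =>
      have hx : x = 1 := Subtype.ext (h2 (x : Γ) x.2)
      rw [hx, map_one]
    | mul a b ha hb => rw [ha, hb, one_mul]
  intro a b _
  rw [key a, key b]

theorem three_le_card {Γ : Type} [Group Γ] (H : Subgroup Γ) (g : Γ) (hg : g ∈ H)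
    (htor : ¬ IsOfFinOrder g) : 3 ≤ Cardinal.mk ↥H := by
  have hinj : Function.Injective (fun n : Fin 3 => ((⟨g, hg⟩ : ↥H) ^ (n : ℕ) : ↥H)) := by
    intro i j hij
    have h2 : g ^ (i : ℕ) = g ^ (j : ℕ) := by
      have := congrArg (Subtype.val) hij
      simpa using this
    exact Fin.ext (injective_pow_iff_not_isOfFinOrder.mpr htor h2)
  have := Cardinal.mk_le_of_injective hinj
  simpa using this

end Helpers

end BOSproof


open BOSproof in
/-- Theorem (Bowditch–Ohshika–Sakuma, abstract form): there is `K₀`, depending only on `δ`,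
`L` and the acylindricity data `R`, `N`, such that whenever two subgroups `G₁`, `G₂` of the
isometry group of a δ-hyperbolic geodesic space preserve `L`-quasi-convex sets `Δ₁`, `Δ₂`
satisfying the listed conditions and the distance between `Δ₁` and `Δ₂` exceeds `K₀`, the
canonical homomorphism `G₁ * G₂ → Isom(X)` is injective. -/
theorem stmt_4 (δ L : ℝ) (hδ : 0 < δ) (hL : 0 < L) (R : ℝ → ℝ) (N : ℝ → ℕ) :
    ∃ K₀ : ℝ, 0 < K₀ ∧
      ∀ (X : Type) [MetricSpace X],
        GeodesicSpace X → ThinTriangles X δ →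
        ∀ (G₁ G₂ : Subgroup (X ≃ᵢ X)) (Δ₁ Δ₂ : Set X),
          Δ₁.Nonempty → Δ₂.Nonempty →
          QuasiConvex Δ₁ L → QuasiConvex Δ₂ L →
          (∀ g ∈ G₁, (g : X ≃ᵢ X) '' Δ₁ = Δ₁) →
          (∀ g ∈ G₂, (g : X ≃ᵢ X) '' Δ₂ = Δ₂) →
          (∀ g ∈ G₁, g ≠ 1 → ¬ IsOfFinOrder g) →
          (∀ g ∈ G₂, g ≠ 1 → ¬ IsOfFinOrder g) →
          (∀ D : ℝ, 0 < D → ∀ x y : X, dist x y ≥ R D →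
            {g : X ≃ᵢ X | g ∈ G₁ ∧ dist x (g x) ≤ D ∧ dist y (g y) ≤ D}.Finite ∧
            {g : X ≃ᵢ X | g ∈ G₁ ∧ dist x (g x) ≤ D ∧ dist y (g y) ≤ D}.ncard ≤ N D) →
          (∀ D : ℝ, 0 < D → ∀ x y : X, dist x y ≥ R D →
            {g : X ≃ᵢ X | g ∈ G₂ ∧ dist x (g x) ≤ D ∧ dist y (g y) ≤ D}.Finite ∧
            {g : X ≃ᵢ X | g ∈ G₂ ∧ dist x (g x) ≤ D ∧ dist y (g y) ≤ D}.ncard ≤ N D) →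
          (∀ r : ℝ, L ≤ r → ∀ p : X,
            ∃ q ∈ {u : X | infDist u Δ₁ ≤ r}, dist p q = infDist p {u : X | infDist u Δ₁ ≤ r}) →
          (∀ r : ℝ, L ≤ r → ∀ p : X,
            ∃ q ∈ {u : X | infDist u Δ₂ ≤ r}, dist p q = infDist p {u : X | infDist u Δ₂ ≤ r}) →
          ∀ x₀ ∈ Δ₁, ∀ z₀ ∈ Δ₂,
            (∀ a ∈ Δ₁, ∀ b ∈ Δ₂, dist x₀ z₀ ≤ dist a b) →
            dist x₀ z₀ > K₀ →
            Function.Injective (Monoid.Coprod.lift G₁.subtype G₂.subtype) := by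
  refine ⟨KK δ L R N, ?_, ?_⟩
  · have h0 : (0:ℝ) ≤ max (R (7*δ + 4*L + 2)) 0 := le_max_right _ _
    have h1 : (0:ℝ) ≤ ((N (7*δ + 4*L + 2) + 1 : ℕ) : ℝ) * (7*δ + 4*L + 2) / 2 := by positivity
    unfold KK BB s2 s1 T1 Mb MM th
    linarith
  intro X _ hGeo hThin G₁ G₂ Δ₁ Δ₂ hne₁ hne₂ hQC₁ hQC₂ hInv₁ hInv₂ hTor₁ hTor₂
    hAcyl₁ hAcyl₂ _hProj₁ _hProj₂ x₀ hx₀ z₀ hz₀ hminab hdist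
  -- numeric facts
  have hBpos : 0 < BB δ L R N := by
    have h0 : (0:ℝ) ≤ max (R (7*δ + 4*L + 2)) 0 := le_max_right _ _
    have h1 : (0:ℝ) ≤ ((N (7*δ + 4*L + 2) + 1 : ℕ) : ℝ) * (7*δ + 4*L + 2) / 2 := by positivity
    unfold BB s2 s1 T1 Mb MM th
    linarith
  have hKB : BB δ L R N < KK δ L R N := by unfold KK; linarith
  set d := dist x₀ z₀ with hd
  have hdK : KK δ L R N < d := hdist
  set Bo := BB δ L R N with hBo
  set β := Bo + δ with hβ
  -- minimality facts
  have hmin₁ : ∀ a ∈ Δ₁, dist x₀ z₀ ≤ dist z₀ a := by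
    intro a ha
    rw [dist_comm z₀ a]
    exact hminab a ha z₀ hz₀
  have hmin₂ : ∀ b ∈ Δ₂, dist z₀ x₀ ≤ dist x₀ b := by
    intro b hb
    rw [dist_comm z₀ x₀]
    exact hminab x₀ hx₀ b hb
  have hdcomm : dist z₀ x₀ = d := dist_comm z₀ x₀
  -- the two core propositions
  have core₁ : ∀ g : X ≃ᵢ X, g ∈ G₁ → g ≠ 1 → gromovProd x₀ z₀ (g z₀) ≤ Bo := by
    intro g hg hgne
    exact core_rho_le_B hδ hL hGeo hThin hQC₁ hx₀ hmin₁ hInv₁ hTor₁ hAcyl₁ hg hgne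
  have core₂ : ∀ g : X ≃ᵢ X, g ∈ G₂ → g ≠ 1 → gromovProd z₀ x₀ (g x₀) ≤ Bo := by
    intro g hg hgne
    exact core_rho_le_B hδ hL hGeo hThin hQC₂ hz₀ hmin₂ hInv₂ hTor₂ hAcyl₂ hg hgne
  -- ping-pong sets
  set A : Bool → Set X := fun b =>
    bif b then {p | gromovProd x₀ z₀ p ≤ β} else {p | gromovProd z₀ x₀ p ≤ β} with hA
  -- numeric conditions for pp_step
  have hnum1 : β + 2*δ + (δ + L) < d := by
    have := hKB
    unfold KK at hdK
    simp only [hβ, hBo] at *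
    linarith
  have hnum2 : Bo + β + 2*δ < d := by
    unfold KK at hdK
    simp only [hβ, hBo] at *
    linarith
  have hnum2' : Bo + β + 2*δ < dist z₀ x₀ := by rw [hdcomm]; exact hnum2
  have hnum1' : β + 2*δ + (δ + L) < dist z₀ x₀ := by rw [hdcomm]; exact hnum1
  -- ping-pong steps
  have step₁ : ∀ g : X ≃ᵢ X, g ∈ G₁ → g ≠ 1 →
      ∀ p, gromovProd z₀ x₀ p ≤ β → gromovProd x₀ z₀ (g p) ≤ β := by
    intro g hg hgne p hp
    have hq : g⁻¹ x₀ ∈ Δ₁ := by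
      have h1 : g⁻¹ x₀ ∈ (g⁻¹ : X ≃ᵢ X) '' Δ₁ := Set.mem_image_of_mem _ hx₀
      rwa [hInv₁ g⁻¹ (inv_mem hg)] at h1
    exact pp_step hδ hL hGeo hThin hQC₁ hx₀ hmin₁ hβ (core₁ g hg hgne) hq hnum1 hnum2 hp
  have step₂ : ∀ g : X ≃ᵢ X, g ∈ G₂ → g ≠ 1 →
      ∀ p, gromovProd x₀ z₀ p ≤ β → gromovProd z₀ x₀ (g p) ≤ β := by
    intro g hg hgne p hp
    have hq : g⁻¹ z₀ ∈ Δ₂ := by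
      have h1 : g⁻¹ z₀ ∈ (g⁻¹ : X ≃ᵢ X) '' Δ₂ := Set.mem_image_of_mem _ hz₀
      rwa [hInv₂ g⁻¹ (inv_mem hg)] at h1
    exact pp_step hδ hL hGeo hThin hQC₂ hz₀ hmin₂ hβ (core₂ g hg hgne) hq hnum1' hnum2' hp
  -- handle the degenerate case
  by_cases htriv : (∀ g ∈ G₁, g = 1) ∧ (∀ g ∈ G₂, g = 1)
  · exact trivial_case G₁ G₂ htriv.1 htriv.2
  -- the family of subgroups
  have hβ0 : 0 ≤ β := by simp only [hβ, hBo]; linarith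
  set K : Bool → Subgroup (X ≃ᵢ X) := fun b => bif b then G₁ else G₂ with hK
  set f : ∀ b : Bool, ↥(K b) →* (X ≃ᵢ X) := fun b => (K b).subtype with hf
  have hXnonempty : ∀ b, (A b).Nonempty := by
    intro b
    cases b
    · refine ⟨z₀, ?_⟩
      simp only [hA, cond_false, Set.mem_setOf_eq]
      have : gromovProd z₀ x₀ z₀ = 0 := by
        simp [gromovProd]
      rw [this]; exact hβ0
    · refine ⟨x₀, ?_⟩
      simp only [hA, cond_true, Set.mem_setOf_eq]
      have : gromovProd x₀ z₀ x₀ = 0 := by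
        simp [gromovProd]
      rw [this]; exact hβ0
  have hXdisj : Pairwise (Function.onFun Disjoint A) := by
    intro i j hij
    have hdis : Disjoint {p : X | gromovProd x₀ z₀ p ≤ β} {p : X | gromovProd z₀ x₀ p ≤ β} := by
      rw [Set.disjoint_left]
      intro p hp1 hp2
      simp only [Set.mem_setOf_eq] at hp1 hp2
      have h2 := gp_swap z₀ x₀ p
      rw [dist_comm z₀ x₀, ← hd] at h2
      unfold KK at hdK
      simp only [hβ, hBo] at hp1 hp2
      linarith
    cases i <;> cases j <;> simp_all [hA] <;> [exact hdis.symm; exact hdis]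
  have hpp : Pairwise fun i j => ∀ h : ↥(K i), h ≠ 1 → f i h • A j ⊆ A i := by
    intro i j hij
    intro h hne
    have hcoe : (h : X ≃ᵢ X) ≠ 1 := by
      intro hcon
      exact hne (Subtype.ext hcon)
    rw [Set.smul_set_subset_iff]
    intro p hp
    cases i
    · cases j
      · exact absurd rfl hij
      · -- i = false (G₂ side), j = true
        have hmem : (h : X ≃ᵢ X) ∈ G₂ := h.2
        simp only [hA, cond_true, cond_false, Set.mem_setOf_eq] at hp ⊢
        simp only [isometryEquiv_smul_def]
        exact step₂ (h : X ≃ᵢ X) hmem hcoe p hp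
    · cases j
      · -- i = true (G₁ side), j = false
        have hmem : (h : X ≃ᵢ X) ∈ G₁ := h.2
        simp only [hA, cond_true, cond_false, Set.mem_setOf_eq] at hp ⊢
        simp only [isometryEquiv_smul_def]
        exact step₁ (h : X ≃ᵢ X) hmem hcoe p hp
      · exact absurd rfl hij
  have hcard : (3 : Cardinal) ≤ Cardinal.mk Bool ∨ ∃ b : Bool, 3 ≤ Cardinal.mk ↥(K b) := by
    right
    rw [not_and_or] at htriv
    rcases htriv with h1 | h2
    · push_neg at h1
      obtain ⟨g, hg, hgne⟩ := h1
      exact ⟨true, three_le_card G₁ g hg (hTor₁ g hg hgne)⟩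
    · push_neg at h2
      obtain ⟨g, hg, hgne⟩ := h2
      exact ⟨false, three_le_card G₂ g hg (hTor₂ g hg hgne)⟩
  have hCoprodI : Function.Injective (Monoid.CoprodI.lift f) :=
    Monoid.CoprodI.lift_injective_of_ping_pong f hcard A hXnonempty hXdisj hpp
  exact binary_transfer G₁ G₂ hCoprodI
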